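/- If integers q, p, a satisfy q^2 - a*p^2 = 4 with p and q both odd, then x = p*(q^2-1)/2 and y = q*(q^2-3)/2 are integers satisfying y^2 - a*x^2 = 1. -/
import Mathlib

theorem euler_lemma_pos_four (a p q : ℤ) (hp : Odd p) (hq : Odd q)
    (h : q^2 - a*p^2 = 4) :
    ∃ x y : ℤ, 2*x = p*(q^2 - 1) ∧ 2*y = q*(q^2 - 3) ∧ y^2 - a*x^2 = 1 := by
  obtain ⟨k, hk⟩ := hq
  subst hk
  refine ⟨p*(2*k^2+2*k), (2*k+1)*(2*k^2+2*k-1), by ring, by ring, ?_⟩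
  linear_combination (2*k^2+2*k)^2 * h
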